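/- Let X be a measurable space, n ∈ ℕ, and V a set of measurable functions g : (Fin n → X) → [0,∞] each of which is symmetric, i.e. g(x ∘ σ) = g(x) for every permutation σ of Fin n. For a symmetric measurable g, let eq\g : X^{(n)} → [0,∞] denote the induced measurable function on the symmetric power, characterised by (eq\g) ∘ F = g. Then { eq\g | g ∈ V°° and g symmetric } = ({ eq\g | g ∈ V })°°, where the polar of V is taken among s-finite measures on Fin n → X and the polars on the right-hand side among s-finite measures on X^{(n)} and measurable functions on X^{(n)}. -/

import Mathlib

open MeasureTheory
open scoped ENNReal

/-- The polar of a set of `[0,∞]`-valued functions on `W`: the s-finite measures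
integrating every member to at most `1`. -/
def funPolar {W : Type*} [MeasurableSpace W] (G : Set (W → ℝ≥0∞)) : Set (Measure W) :=
  {μ | SFinite μ ∧ ∀ g ∈ G, ∫⁻ w, g w ∂μ ≤ 1}

/-- The polar of a set of measures on `W`: the measurable `[0,∞]`-valued functions
integrating to at most `1` against every member. -/
def measPolar {W : Type*} [MeasurableSpace W] (M : Set (Measure W)) : Set (W → ℝ≥0∞) :=
  {f | Measurable f ∧ ∀ μ ∈ M, ∫⁻ w, f w ∂μ ≤ 1}

/-- Double polar of a set of functions. -/
def biPolar {W : Type*} [MeasurableSpace W] (G : Set (W → ℝ≥0∞)) : Set (W → ℝ≥0∞) :=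
  measPolar (funPolar G)

/-- `F^{⊗n} = { f₁ ⊗ ⋯ ⊗ fₙ | all fᵢ ∈ F }`, where
`(f₁ ⊗ ⋯ ⊗ fₙ)(x) = ∏ i, fᵢ (x i)` on `Fin n → X`. -/
def tensorPow {X : Type*} (F : Set (X → ℝ≥0∞)) (n : ℕ) : Set ((Fin n → X) → ℝ≥0∞) :=
  {g | ∃ f : Fin n → X → ℝ≥0∞, (∀ i, f i ∈ F) ∧ g = fun x => ∏ i, f i (x i)}

/-- The barycentre `s_n(g)(x) = (n!)⁻¹ Σ_{σ ∈ Perm (Fin n)} g (x ∘ σ)`. -/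
noncomputable def bary {X : Type*} (n : ℕ) (g : (Fin n → X) → ℝ≥0∞) :
    (Fin n → X) → ℝ≥0∞ :=
  fun x => (n.factorial : ℝ≥0∞)⁻¹ * ∑ σ : Equiv.Perm (Fin n), g (x ∘ σ)


/-- The setoid on `Fin n → X` identifying tuples up to permutation of coordinates. -/
def symSetoid (X : Type*) (n : ℕ) : Setoid (Fin n → X) where
  r x y := ∃ σ : Equiv.Perm (Fin n), x ∘ σ = y
  iseqv := by
    refine ⟨fun x => ⟨1, ?_⟩, ?_, ?_⟩
    · funext i; simp
    · rintro x y ⟨σ, rfl⟩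
      exact ⟨σ⁻¹, by funext i; simp⟩
    · rintro x y z ⟨σ, rfl⟩ ⟨τ, rfl⟩
      exact ⟨σ * τ, by funext i; simp [Equiv.Perm.mul_apply]⟩

/-- The symmetric power `X^{(n)}`: the quotient of `Fin n → X` by permutations. -/
def SymPow (X : Type*) (n : ℕ) : Type _ := Quotient (symSetoid X n)

/-- `X^{(n)}` carries the σ-algebra pushed forward along the quotient map
`F : (Fin n → X) → X^{(n)}`. -/
instance SymPow.instMeasurableSpace (X : Type*) [MeasurableSpace X] (n : ℕ) :
    MeasurableSpace (SymPow X n) :=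
  MeasurableSpace.map (Quotient.mk (symSetoid X n)) inferInstance

section Aux

variable {X : Type*} [MeasurableSpace X] {n : ℕ}

lemma measurable_symQuot : Measurable (Quotient.mk (symSetoid X n)) :=
  fun _ h => h

lemma measurable_of_comp_symQuot {G : SymPow X n → ℝ≥0∞}
    (h : Measurable fun x : Fin n → X => G (Quotient.mk (symSetoid X n) x)) :
    Measurable G := fun _ hs => h hs

lemma comp_perm_measurable (σ : Equiv.Perm (Fin n)) :
    Measurable fun x : Fin n → X => x ∘ σ :=
  measurable_pi_lambda _ fun i => measurable_pi_apply (σ i)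

/-- Summing over all permutations gives a symmetric function. -/
lemma sum_perm_comp (g : (Fin n → X) → ℝ≥0∞) (x : Fin n → X) (τ : Equiv.Perm (Fin n)) :
    ∑ σ : Equiv.Perm (Fin n), g ((x ∘ τ) ∘ σ) = ∑ σ : Equiv.Perm (Fin n), g (x ∘ σ) := by
  exact Fintype.sum_equiv (Equiv.mulLeft τ) _ _ fun σ => rfl

lemma out_spec (x : Fin n → X) :
    ∃ σ : Equiv.Perm (Fin n),
      (Quotient.out (Quotient.mk (symSetoid X n) x)) ∘ σ = x :=
  Quotient.exact (Quotient.out_eq (Quotient.mk (symSetoid X n) x))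

lemma symm_out (g : (Fin n → X) → ℝ≥0∞)
    (hg : ∀ (σ : Equiv.Perm (Fin n)) (x : Fin n → X), g (x ∘ σ) = g x)
    (x : Fin n → X) :
    g (Quotient.out (Quotient.mk (symSetoid X n) x)) = g x := by
  obtain ⟨σ, hσ⟩ := out_spec x
  calc g (Quotient.out (Quotient.mk (symSetoid X n) x))
      = g (Quotient.out (Quotient.mk (symSetoid X n) x) ∘ σ) := (hg σ _).symm
    _ = g x := by rw [hσ]

/-- The symmetrising kernel `SymPow X n → Measure (Fin n → X)`. -/
noncomputable def symKer (X : Type*) [MeasurableSpace X] (n : ℕ) :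
    ProbabilityTheory.Kernel (SymPow X n) (Fin n → X) where
  toFun z := (n.factorial : ℝ≥0∞)⁻¹ •
    ∑ σ : Equiv.Perm (Fin n), Measure.dirac (Quotient.out z ∘ σ)
  measurable' := by
    refine Measure.measurable_of_measurable_coe _ fun S hS => ?_
    have key : ∀ z : SymPow X n,
        ((n.factorial : ℝ≥0∞)⁻¹ •
          ∑ σ : Equiv.Perm (Fin n), Measure.dirac (Quotient.out z ∘ σ)) S =
        (n.factorial : ℝ≥0∞)⁻¹ *
          ∑ σ : Equiv.Perm (Fin n), S.indicator (1 : (Fin n → X) → ℝ≥0∞) (Quotient.out z ∘ σ) := by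
      intro z
      rw [Measure.smul_apply, smul_eq_mul]
      congr 1
      rw [Measure.finset_sum_apply]
      exact Finset.sum_congr rfl fun σ _ => Measure.dirac_apply' _ hS
    simp only [key]
    refine Measurable.const_mul ?_ _
    refine measurable_of_comp_symQuot (G := fun z =>
      ∑ σ : Equiv.Perm (Fin n), S.indicator 1 (Quotient.out z ∘ σ)) ?_
    have hsymm : ∀ x : Fin n → X,
        ∑ σ : Equiv.Perm (Fin n),
            S.indicator (1 : (Fin n → X) → ℝ≥0∞)
              (Quotient.out (Quotient.mk (symSetoid X n) x) ∘ σ) =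
        ∑ σ : Equiv.Perm (Fin n), S.indicator 1 (x ∘ σ) := by
      intro x
      obtain ⟨τ, hτ⟩ := out_spec x
      conv_rhs => rw [← hτ]
      exact (sum_perm_comp (S.indicator 1) _ τ).symm
    simp only [hsymm]
    exact Finset.measurable_sum _ fun σ _ =>
      ((measurable_one.indicator hS)).comp (comp_perm_measurable σ)

lemma symKer_lintegral {g : (Fin n → X) → ℝ≥0∞} (hg : Measurable g)
    (hsym : ∀ (σ : Equiv.Perm (Fin n)) (x : Fin n → X), g (x ∘ σ) = g x)
    (z : SymPow X n) :
    ∫⁻ x, g x ∂(symKer X n z) = g (Quotient.out z) := by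
  show ∫⁻ x, g x ∂((n.factorial : ℝ≥0∞)⁻¹ •
      ∑ σ : Equiv.Perm (Fin n), Measure.dirac (Quotient.out z ∘ σ)) = _
  rw [lintegral_smul_measure, lintegral_finset_sum_measure]
  have : ∀ σ : Equiv.Perm (Fin n),
      ∫⁻ x, g x ∂(Measure.dirac (Quotient.out z ∘ σ)) = g (Quotient.out z) := by
    intro σ
    rw [lintegral_dirac' _ hg, hsym]
  rw [Finset.sum_congr rfl fun σ _ => this σ, Finset.sum_const, Finset.card_univ,
    Fintype.card_perm, Fintype.card_fin, nsmul_eq_mul, smul_eq_mul, ← mul_assoc,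
    ENNReal.inv_mul_cancel (by exact_mod_cast n.factorial_ne_zero) (ENNReal.natCast_ne_top _),
    one_mul]

instance : ProbabilityTheory.IsMarkovKernel (symKer X n) := by
  constructor
  intro z
  constructor
  have := symKer_lintegral (g := fun _ : Fin n → X => (1 : ℝ≥0∞)) measurable_const
    (fun _ _ => rfl) (z := z)
  simpa using this

end Aux

/-- for a set `V` of symmetric measurable functions on `Fin n → X`,
the descents to the symmetric power `X^{(n)}` of the symmetric members of `V°°`
form exactly the double polar (on `X^{(n)}`) of the set of descents of members of `V`. -/
theorem descent_biPolar_eq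
    {X : Type*} [MeasurableSpace X] (n : ℕ)
    (V : Set ((Fin n → X) → ℝ≥0∞))
    (hV : ∀ g ∈ V, Measurable g ∧ ∀ (σ : Equiv.Perm (Fin n)) (x : Fin n → X), g (x ∘ σ) = g x) :
    {G : SymPow X n → ℝ≥0∞ | ∃ g, g ∈ biPolar V ∧
        (∀ (σ : Equiv.Perm (Fin n)) (x : Fin n → X), g (x ∘ σ) = g x) ∧
        ∀ x : Fin n → X, G (Quotient.mk (symSetoid X n) x) = g x} =
      biPolar {G : SymPow X n → ℝ≥0∞ | ∃ g ∈ V,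
        ∀ x : Fin n → X, G (Quotient.mk (symSetoid X n) x) = g x} := by
  ext G
  simp only [Set.mem_setOf_eq, biPolar, measPolar, funPolar]
  constructor
  · rintro ⟨g, ⟨hgm, hgpol⟩, hgsym, hGg⟩
    have hGmeas : Measurable G := measurable_of_comp_symQuot (by simpa only [hGg] using hgm)
    refine ⟨hGmeas, ?_⟩
    rintro ν ⟨hνs, hνpol⟩
    haveI := hνs
    set μ := (ν.compProd (symKer X n)).map Prod.snd with hμdef
    have hμint : ∀ f : (Fin n → X) → ℝ≥0∞, Measurable f →
        (∀ (σ : Equiv.Perm (Fin n)) (x : Fin n → X), f (x ∘ σ) = f x) →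
        ∫⁻ x, f x ∂μ = ∫⁻ z, f (Quotient.out z) ∂ν := by
      intro f hf hfsym
      rw [hμdef, lintegral_map hf measurable_snd,
        Measure.lintegral_compProd (f := fun p : SymPow X n × (Fin n → X) => f p.2)
          (hf.comp measurable_snd)]
      exact lintegral_congr fun z => symKer_lintegral hf hfsym z
    have hμmem : SFinite μ ∧ ∀ v ∈ V, ∫⁻ x, v x ∂μ ≤ 1 := by
      refine ⟨inferInstance, fun v hv => ?_⟩
      obtain ⟨hvm, hvsym⟩ := hV v hv
      rw [hμint v hvm hvsym]
      exact hνpol _ ⟨v, hv, fun x => symm_out v hvsym x⟩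
    have hle := hgpol μ hμmem
    have hGout : ∀ z : SymPow X n, G z = g (Quotient.out z) := by
      intro z
      conv_lhs => rw [← Quotient.out_eq z]
      rw [hGg]
    calc ∫⁻ z, G z ∂ν = ∫⁻ z, g (Quotient.out z) ∂ν := lintegral_congr hGout
      _ = ∫⁻ x, g x ∂μ := (hμint g hgm hgsym).symm
      _ ≤ 1 := hle
  · rintro ⟨hGm, hGpol⟩
    refine ⟨fun x => G (Quotient.mk (symSetoid X n) x),
      ⟨hGm.comp measurable_symQuot, ?_⟩, ?_, fun _ => rfl⟩
    · rintro μ ⟨hμs, hμpol⟩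
      haveI := hμs
      set ν : Measure (SymPow X n) := μ.map (Quotient.mk (symSetoid X n)) with hνdef
      have hν : SFinite ν ∧
          ∀ G' ∈ {G' : SymPow X n → ℝ≥0∞ | ∃ g ∈ V,
            ∀ x : Fin n → X, G' (Quotient.mk (symSetoid X n) x) = g x},
            ∫⁻ z, G' z ∂ν ≤ 1 := by
        refine ⟨(show SFinite (Measure.map (β := SymPow X n) (Quotient.mk (symSetoid X n)) μ) from
          Measure.instSFiniteMap μ (Quotient.mk (symSetoid X n))), ?_⟩
        rintro G' ⟨v, hv, hG'⟩
        have hG'm : Measurable G' :=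
          measurable_of_comp_symQuot (by simpa only [hG'] using (hV v hv).1)
        rw [hνdef, lintegral_map hG'm measurable_symQuot]
        calc ∫⁻ x, G' (Quotient.mk (symSetoid X n) x) ∂μ
            = ∫⁻ x, v x ∂μ := lintegral_congr fun x => hG' x
          _ ≤ 1 := hμpol v hv
      have hle := hGpol _ hν
      rwa [hνdef, lintegral_map hGm measurable_symQuot] at hle
    · intro σ x
      have hr : ∃ τ : Equiv.Perm (Fin n), (x ∘ σ) ∘ τ = x := ⟨σ⁻¹, by funext i; simp⟩
      exact congrArg G (Quotient.sound (s := symSetoid X n) hr)
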